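/- Let p be a prime, k > 4 even, and a' ≤ a ≤ a' + 2s nonnegative integers with s ≥ 1. The special limit λ = p^{s(3-2k)} (1 - p^{(2-k)(a'+1)})/(1 - p^{(2-k)(a+1)}) is not equal to any ratio F(a₁, b₁, χ)/F(a₂, b₂, χ) of local Siegel series values with b₁ < b₂, a₁ ≤ a₂ (both values integers). Indeed: F(a₂,b₂,χ) ≡ 1 mod p while λ in lowest terms has denominator divisible by p, so λ · F(a₂,b₂,χ) is never an integer, whereas F(a₁,b₁,χ) is. -/

import Mathlib

open scoped BigOperators

/-- The local Siegel series `F_p(T, 3-k)` evaluated combinatorially: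
`F(a,b,χ) = ∑_{ℓ=0}^{a} p^{ℓ(k-1)} ( ∑_{w=0}^{b-ℓ} p^{w(2k-3)} - χ p^{k-2} ∑_{w=0}^{b-ℓ-1} p^{w(2k-3)} )`,
where sums with negative upper index are zero. -/
def siegelF (p k a b : ℕ) (χ : ℤ) : ℤ :=
  ∑ ℓ ∈ Finset.range (a + 1),
    if ℓ ≤ b then
      (p : ℤ) ^ (ℓ * (k - 1)) *
        ((∑ w ∈ Finset.range (b - ℓ + 1), (p : ℤ) ^ (w * (2 * k - 3))) -
          χ * (p : ℤ) ^ (k - 2) * ∑ w ∈ Finset.range (b - ℓ), (p : ℤ) ^ (w * (2 * k - 3)))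
    else 0

lemma siegel_mod (p k a b : ℕ) [Fact p.Prime] (hk : 4 < k) (χ : ℤ) :
    ((siegelF p k a b χ : ℤ) : ZMod p) = 1 := by
  have hp0 : ((p : ℤ) : ZMod p) = 0 := by exact_mod_cast ZMod.natCast_self p
  unfold siegelF
  push_cast [hp0]
  rw [Finset.sum_eq_single 0]
  · rw [if_pos (Nat.zero_le b)]
    have hs1 : (∑ w ∈ Finset.range (b - 0 + 1), (0 : ZMod p) ^ (w * (2 * k - 3))) = 1 := by
      rw [Finset.sum_eq_single 0]
      · simp
      · intro w _ hw
        exact zero_pow (Nat.mul_ne_zero hw (by omega))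
      · intro h; exact absurd (Finset.mem_range.mpr (Nat.succ_pos _)) h
    rw [hs1, zero_pow (by omega : k - 2 ≠ 0)]
    simp
  · intro ℓ _ hℓ
    split_ifs with h
    · rw [zero_pow (Nat.mul_ne_zero hℓ (by omega)), zero_mul]
    · rfl
  · intro h; exact absurd (Finset.mem_range.mpr (Nat.succ_pos _)) h

lemma siegel_ne_zero (p k a b : ℕ) [Fact p.Prime] (hk : 4 < k) (χ : ℤ) :
    siegelF p k a b χ ≠ 0 := by
  intro h
  have := siegel_mod p k a b hk χ
  rw [h] at this
  simp at this

/-- A special limit `λ = p^{s(3-2k)} (1-p^{(2-k)(a'+1)})/(1-p^{(2-k)(a+1)})` is never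
equal to a ratio `F(a₁,b₁,χ)/F(a₂,b₂,χ)` of local Siegel series values with
`b₁ < b₂` and `a₁ ≤ a₂`. -/
theorem stmt19 (p k s a a' : ℕ) (hp : p.Prime) (hk : Even k) (hk4 : 4 < k)
    (hs : 0 < s) (ha' : a' ≤ a) (ha : a ≤ a' + 2 * s) :
    ∀ (a₁ a₂ b₁ b₂ : ℕ) (χ : ℤ), χ = -1 ∨ χ = 0 ∨ χ = 1 → b₁ < b₂ → a₁ ≤ a₂ →
      (siegelF p k a₁ b₁ χ : ℚ) / (siegelF p k a₂ b₂ χ : ℚ) ≠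
        (p : ℚ) ^ ((s : ℤ) * (3 - 2 * (k : ℤ))) *
          (1 - (p : ℚ) ^ ((2 - (k : ℤ)) * ((a' : ℤ) + 1))) /
          (1 - (p : ℚ) ^ ((2 - (k : ℤ)) * ((a : ℤ) + 1))) := by
  haveI := Fact.mk hp
  intro a₁ a₂ b₁ b₂ χ hχ hb ha12 h
  have hq1 : (1 : ℚ) < (p : ℚ) := by exact_mod_cast hp.one_lt
  have hq0 : (p : ℚ) ≠ 0 := by positivity
  set d := a - a' with hd_def
  have had : a = a' + d := (Nat.add_sub_cancel' ha').symm
  have hd : d ≤ 2 * s := by omega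
  set c := (k - 2) * d with hc_def
  set m := (k - 2) * (a' + 1) with hm_def
  set n := m + c with hn_def
  have hcE : c + 1 ≤ s * (2 * k - 3) := by
    have h1 : c ≤ 2 * s * (k - 2) := by
      calc c = (k - 2) * d := rfl
        _ ≤ (k - 2) * (2 * s) := Nat.mul_le_mul_left _ hd
        _ = 2 * s * (k - 2) := by ring
    have h2 : 2 * s * (k - 2) + s ≤ s * (2 * k - 3) := by
      have : 2 * (k - 2) + 1 ≤ 2 * k - 3 := by omega
      calc 2 * s * (k - 2) + s = s * (2 * (k - 2) + 1) := by ring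
        _ ≤ s * (2 * k - 3) := Nat.mul_le_mul_left _ this
    omega
  set e := s * (2 * k - 3) - c with he_def
  have he1 : 1 ≤ e := by omega
  have heE : e + c = s * (2 * k - 3) := by omega
  have hm1 : 1 ≤ m := Nat.one_le_iff_ne_zero.mpr (Nat.mul_ne_zero (by omega) (by omega))
  have hk2 : (2 : ℕ) ≤ k := by omega
  -- exponent identities
  have e1 : (s : ℤ) * (3 - 2 * (k : ℤ)) = -((s * (2 * k - 3) : ℕ) : ℤ) := by
    push_cast [Nat.cast_sub (by omega : 3 ≤ 2 * k)]
    ring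
  have e2 : (2 - (k : ℤ)) * ((a' : ℤ) + 1) = -((m : ℤ)) := by
    rw [hm_def]
    push_cast [Nat.cast_sub hk2]
    ring
  have e3 : (2 - (k : ℤ)) * ((a : ℤ) + 1) = -((n : ℤ)) := by
    have hac : (a : ℤ) = (a' : ℤ) + (d : ℤ) := by exact_mod_cast congrArg (Nat.cast : ℕ → ℤ) had
    rw [hn_def, hm_def, hc_def]
    push_cast [Nat.cast_sub hk2]
    rw [hac]; ring
  rw [e1, e2, e3, zpow_neg, zpow_neg, zpow_neg, zpow_natCast, zpow_natCast, zpow_natCast] at h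
  rw [← heE] at h
  -- nonzero facts
  have hqc : (0 : ℚ) < (p : ℚ) ^ c := by positivity
  have hqm1 : (1 : ℚ) < (p : ℚ) ^ m := one_lt_pow₀ hq1 (by omega)
  have hqn1 : (1 : ℚ) < (p : ℚ) ^ m * (p : ℚ) ^ c := by
    have h2 : (1 : ℚ) ≤ (p : ℚ) ^ c := one_le_pow₀ hq1.le
    nlinarith
  have hden1 : (1 : ℚ) - ((p : ℚ) ^ n)⁻¹ ≠ 0 := by
    rw [hn_def, pow_add]
    have : ((p : ℚ) ^ m * (p : ℚ) ^ c)⁻¹ < 1 := inv_lt_one_of_one_lt₀ hqn1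
    intro hcon
    nlinarith
  have hden2 : (p : ℚ) ^ e * ((p : ℚ) ^ n - 1) ≠ 0 := by
    rw [hn_def, pow_add]
    have h1 : (0 : ℚ) < (p : ℚ) ^ e := by positivity
    have : (0 : ℚ) < (p : ℚ) ^ m * (p : ℚ) ^ c - 1 := by linarith
    positivity
  have hF2 : (siegelF p k a₂ b₂ χ : ℚ) ≠ 0 := by
    exact_mod_cast siegel_ne_zero p k a₂ b₂ hk4 χ
  have hRHS : ((p : ℚ) ^ (e + c))⁻¹ * (1 - ((p : ℚ) ^ m)⁻¹) / (1 - ((p : ℚ) ^ n)⁻¹) =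
      ((p : ℚ) ^ m - 1) / ((p : ℚ) ^ e * ((p : ℚ) ^ n - 1)) := by
    rw [hn_def, pow_add, pow_add]
    have h1 : (p : ℚ) ^ m * (p : ℚ) ^ c - 1 ≠ 0 := by
      intro hcon; nlinarith
    have h2 : (1 : ℚ) - ((p : ℚ) ^ m * (p : ℚ) ^ c)⁻¹ ≠ 0 := by
      have : ((p : ℚ) ^ m * (p : ℚ) ^ c)⁻¹ < 1 := inv_lt_one_of_one_lt₀ hqn1
      intro hcon; nlinarith
    field_simp
  rw [hRHS, div_eq_div_iff hF2 hden2] at h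
  have hZ : (siegelF p k a₁ b₁ χ) * ((p : ℤ) ^ e * ((p : ℤ) ^ n - 1)) =
      ((p : ℤ) ^ m - 1) * siegelF p k a₂ b₂ χ := by exact_mod_cast h
  have hZmod := congrArg (fun x : ℤ => (x : ZMod p)) hZ
  have hp0 : ((p : ℤ) : ZMod p) = 0 := by exact_mod_cast ZMod.natCast_self p
  simp only [Int.cast_mul, Int.cast_sub, Int.cast_pow, Int.cast_one, hp0] at hZmod
  rw [siegel_mod p k a₂ b₂ hk4 χ, zero_pow (by omega : e ≠ 0),
      zero_pow (by omega : m ≠ 0)] at hZmod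
  simp at hZmod
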